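/- Let $G$ be a $2k$-connected graph and let $G'$ be a subgraph of $G$ whose graph is $k$-linked. Then $G$ is $k$-linked. -/

import Mathlib

open SimpleGraph

/-- A graph is `k`-connected if it has more than `k` vertices and removing any set of
fewer than `k` vertices leaves it connected. -/
def KConnected {V : Type*} (G : SimpleGraph V) (k : ℕ) : Prop :=
  k < Nat.card V ∧ ∀ S : Finset V, S.card < k → (G.induce ((↑S : Set V)ᶜ)).Connected

/-- A graph with at least `2k` vertices is `k`-linked if every `2k` distinct vertices
`s 1, t 1, …, s k, t k` can be joined by `k` pairwise vertex-disjoint paths,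
with the `i`-th path joining `s i` to `t i`. -/
def KLinked {V : Type*} (G : SimpleGraph V) (k : ℕ) : Prop :=
  2 * k ≤ Nat.card V ∧
  ∀ s t : Fin k → V, Function.Injective (Sum.elim s t) →
    ∃ P : ∀ i : Fin k, G.Walk (s i) (t i),
      (∀ i, (P i).IsPath) ∧
      ∀ i j, i ≠ j → List.Disjoint (P i).support (P j).support

set_option linter.dupNamespace false

namespace MengerAux
variable {V : Type*}

def IsCut (R : V → V → Prop) (A B : Set V) (S : Finset V) : Prop :=
  ∀ (a b : V) (l : List V), l.IsChain R → l.head? = some a → l.getLast? = some b →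
    a ∈ A → b ∈ B → ∃ v ∈ l, v ∈ S

structure PB (R : V → V → Prop) (A B : Set V) (l : List V) : Prop where
  ne : l ≠ []
  chain : l.IsChain R
  nodup : l.Nodup
  headA : l.head ne ∈ A
  lastB : l.getLast ne ∈ B

lemma head?_eq {l : List V} (h : l ≠ []) : l.head? = some (l.head h) := by
  cases l with
  | nil => simp at h
  | cons a t => rfl

lemma prefix_head? {m l : List V} (h : m <+: l) (hm : m ≠ []) : m.head? = l.head? := by
  obtain ⟨r, rfl⟩ := h
  cases m with
  | nil => simp at hm
  | cons a t => rfl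

lemma suffix_getLast? {m l : List V} (h : m <:+ l) (hm : m ≠ []) : m.getLast? = l.getLast? := by
  obtain ⟨r, rfl⟩ := h
  rw [List.getLast?_append]
  cases m with
  | nil => simp at hm
  | cons a t => simp [List.getLast?_eq_getLast (by simp : (a :: t) ≠ [])]

lemma getLast?_eq {l : List V} (h : l ≠ []) : l.getLast? = some (l.getLast h) := by
  exact (List.getLast?_eq_getLast h)

/-- prefix truncation at the first vertex of `T` -/
lemma trunc_last (T : Set V) :
    ∀ (l : List V) (h : l ≠ []), l.getLast h ∈ T →
    ∃ (m : List V) (hm : m ≠ []), m <+: l ∧ m.head hm = l.head h ∧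
      m.getLast hm ∈ T ∧ ∀ v ∈ m.dropLast, v ∉ T := by
  intro l
  induction l with
  | nil => intro h; simp at h
  | cons a t ih =>
    intro h hlast
    by_cases ha : a ∈ T
    · exact ⟨[a], by simp, ⟨t, rfl⟩, rfl, by simpa using ha, by simp⟩
    · have ht : t ≠ [] := by
        rintro rfl
        exact ha (by simpa using hlast)
      have hlt : t.getLast ht ∈ T := by
        rwa [List.getLast_cons ht] at hlast
      obtain ⟨m, hm, hpre, hhead, hlastm, hdrop⟩ := ih ht hlt
      refine ⟨a :: m, by simp, ?_, by simp, ?_, ?_⟩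
      · obtain ⟨r, hr⟩ := hpre
        exact ⟨r, by simp [hr]⟩
      · rwa [List.getLast_cons hm]
      · intro v hv
        rw [List.dropLast_cons_of_ne_nil hm] at hv
        rw [List.mem_cons] at hv
        rcases hv with rfl | hv
        · exact ha
        · exact hdrop v hv


/-- suffix truncation at the last vertex of `T` -/
lemma trunc_head (T : Set V) (l : List V) (h : l ≠ []) (hh : l.head h ∈ T) :
    ∃ (m : List V) (hm : m ≠ []), m <:+ l ∧ m.getLast hm = l.getLast h ∧
      m.head hm ∈ T ∧ ∀ v ∈ m.tail, v ∉ T := by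
  have hr : l.reverse ≠ [] := by simpa using h
  have hlast : l.reverse.getLast hr ∈ T := by
    rw [List.getLast_reverse]
    exact hh
  obtain ⟨m', hm', hpre, hhead, hlastm, hdrop⟩ := trunc_last T l.reverse hr hlast
  have hmr : m'.reverse ≠ [] := by simpa using hm'
  refine ⟨m'.reverse, hmr, ?_, ?_, ?_, ?_⟩
  · have := hpre.reverse
    rwa [List.reverse_reverse] at this
  · rw [List.getLast_reverse, hhead, List.head_reverse]
  · rw [List.head_reverse]
    exact hlastm
  · intro v hv
    apply hdrop
    rw [List.tail_reverse, List.mem_reverse] at hv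
    exact hv

variable {R : V → V → Prop} {x y : V}

/-- splitting a chain at the first usage of the arc `(x, y)`. -/
lemma first_arc : ∀ (l : List V), l.IsChain R →
    ¬ l.IsChain (fun a b => R a b ∧ ¬(a = x ∧ b = y)) →
    ∃ l₁ l₂, l = l₁ ++ x :: y :: l₂ ∧
      (l₁ ++ [x]).IsChain (fun a b => R a b ∧ ¬(a = x ∧ b = y)) := by
  intro l
  induction l with
  | nil => intro _ h2; simp at h2
  | cons a t ih =>
    intro h1 h2
    cases t with
    | nil => simp at h2
    | cons b t' =>
      rw [List.isChain_cons_cons] at h1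
      by_cases hab : a = x ∧ b = y
      · exact ⟨[], t', by simp [hab.1, hab.2], by simp⟩
      · have h2' : ¬ (b :: t').IsChain (fun a b => R a b ∧ ¬(a = x ∧ b = y)) := by
          intro hc
          exact h2 (List.isChain_cons_cons.mpr ⟨⟨h1.1, hab⟩, hc⟩)
        obtain ⟨l₁, l₂, heq, hc⟩ := ih h1.2 h2'
        refine ⟨a :: l₁, l₂, by simp [heq], ?_⟩
        rw [List.cons_append, List.isChain_cons]
        refine ⟨?_, hc⟩
        intro u hu
        cases l₁ with
        | nil =>
          simp at hu heq
          subst hu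
          exact ⟨heq.1 ▸ h1.1, hab ∘ fun hh => ⟨hh.1, heq.1 ▸ hh.2⟩⟩
        | cons c l₁' =>
          simp at hu heq
          subst hu
          exact ⟨heq.1 ▸ h1.1, hab ∘ fun hh => ⟨hh.1, heq.1 ▸ hh.2⟩⟩

/-- splitting a chain at the last usage of the arc `(x, y)`. -/
lemma last_arc : ∀ (l : List V), l.IsChain R →
    ¬ l.IsChain (fun a b => R a b ∧ ¬(a = x ∧ b = y)) →
    ∃ l₁ l₂, l = l₁ ++ x :: y :: l₂ ∧
      (y :: l₂).IsChain (fun a b => R a b ∧ ¬(a = x ∧ b = y)) := by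
  intro l
  induction l with
  | nil => intro _ h2; simp at h2
  | cons a t ih =>
    intro h1 h2
    cases t with
    | nil => simp at h2
    | cons b t' =>
      rw [List.isChain_cons_cons] at h1
      by_cases hc : (b :: t').IsChain (fun a b => R a b ∧ ¬(a = x ∧ b = y))
      · have hab : a = x ∧ b = y := by
          by_contra hab
          exact h2 (List.isChain_cons_cons.mpr ⟨⟨h1.1, hab⟩, hc⟩)
        exact ⟨[], t', by simp [hab.1, hab.2], hab.2 ▸ hc⟩
      · obtain ⟨l₁, l₂, heq, hcc⟩ := ih h1.2 hc
        exact ⟨a :: l₁, l₂, by simp [heq], hcc⟩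


lemma menger_noarc [Fintype V] (n : ℕ) (R : V → V → Prop) (harc : ∀ u v : V, ¬ R u v)
    (A B : Set V) (hcut : ∀ S : Finset V, IsCut R A B S → n ≤ S.card) :
    ∃ f : Fin n → List V, (∀ i, PB R A B (f i)) ∧
      ∀ i j, i ≠ j → (f i).Disjoint (f j) := by
  classical
  set S₀ : Finset V := (A ∩ B).toFinite.toFinset with hS₀
  have hmem : ∀ v : V, v ∈ S₀ ↔ v ∈ A ∧ v ∈ B := by
    intro v; simp [hS₀, Set.Finite.mem_toFinset]
  have hcutS : IsCut R A B S₀ := by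
    intro a b l hchain hhead hlast ha hb
    match l with
    | [] => simp at hhead
    | [v] =>
      simp at hhead hlast
      refine ⟨v, by simp, ?_⟩
      rw [hmem]
      exact ⟨hhead ▸ ha, hlast ▸ hb⟩
    | u :: w :: t =>
      rw [List.isChain_cons_cons] at hchain
      exact absurd hchain.1 (harc u w)
  have hn : n ≤ S₀.card := hcut S₀ hcutS
  obtain ⟨T, hTsub, hTcard⟩ := Finset.exists_subset_card_eq hn
  let e := T.equivFinOfCardEq hTcard
  refine ⟨fun i => [(e.symm i : V)], ?_, ?_⟩
  · intro i
    have hT : (e.symm i : V) ∈ S₀ := hTsub (e.symm i).2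
    rw [hmem] at hT
    exact ⟨by simp, by simp, by simp, hT.1, hT.2⟩
  · intro i j hij v hv hv'
    simp at hv hv'
    apply hij
    have : (e.symm i : V) = (e.symm j : V) := by rw [← hv, ← hv']
    have := Subtype.ext this
    simpa using congrArg e this




theorem menger_nat [Fintype V] (n : ℕ) :
    ∀ (N : ℕ) (R : V → V → Prop), Irreflexive R → {p : V × V | R p.1 p.2}.ncard ≤ N →
    ∀ (A B : Set V), (∀ S : Finset V, IsCut R A B S → n ≤ S.card) →
    ∃ f : Fin n → List V, (∀ i, PB R A B (f i)) ∧
      ∀ i j, i ≠ j → (f i).Disjoint (f j) := by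
  classical
  intro N
  induction N with
  | zero =>
    intro R hirr hcard A B hcut
    refine menger_noarc n R ?_ A B hcut
    intro u v huv
    have h0 : 0 < {p : V × V | R p.1 p.2}.ncard :=
      (Set.ncard_pos (Set.toFinite _)).mpr ⟨(u, v), huv⟩
    omega
  | succ N ih =>
    intro R hirr hcard A B hcut
    by_cases harc : ∃ u v : V, R u v
    swap
    · push_neg at harc
      exact menger_noarc n R harc A B hcut
    obtain ⟨x, y, hxy⟩ := harc
    have hxyne : x ≠ y := fun h => hirr x (h ▸ hxy)
    set R' : V → V → Prop := fun a b => R a b ∧ ¬(a = x ∧ b = y) with hR'def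
    have hirr' : Irreflexive R' := fun a h => hirr a h.1
    have hmono : ∀ {l : List V}, l.IsChain R' → l.IsChain R :=
      fun h => h.imp (fun _ _ hh => hh.1)
    have hcard' : {p : V × V | R' p.1 p.2}.ncard ≤ N := by
      have hss : {p : V × V | R' p.1 p.2} ⊂ {p : V × V | R p.1 p.2} := by
        rw [Set.ssubset_iff_of_subset (fun p hp => hp.1)]
        exact ⟨(x, y), hxy, fun hc => hc.2 ⟨rfl, rfl⟩⟩
      have := Set.ncard_lt_ncard hss (Set.toFinite _)
      omega
    by_cases hsmall : ∀ S : Finset V, IsCut R' A B S → n ≤ S.card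
    · obtain ⟨f, hf, hdisj⟩ := ih R' hirr' hcard' A B hsmall
      exact ⟨f, fun i => ⟨(hf i).ne, hmono (hf i).chain, (hf i).nodup,
        (hf i).headA, (hf i).lastB⟩, hdisj⟩
    push_neg at hsmall
    obtain ⟨S, hScut, hScard⟩ := hsmall
    -- every R-chain from A to B either meets S or contains both x and y
    have hkey : ∀ (a b : V) (l : List V), l.IsChain R → l.head? = some a →
        l.getLast? = some b → a ∈ A → b ∈ B →
        (∃ v ∈ l, v ∈ S) ∨ (x ∈ l ∧ y ∈ l) := by
      intro a b l hch hh hl ha hb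
      by_cases hch' : l.IsChain R'
      · exact Or.inl (hScut a b l hch' hh hl ha hb)
      · obtain ⟨l₁, l₂, heq, -⟩ := first_arc l hch hch'
        subst heq
        exact Or.inr ⟨by simp, by simp⟩
    have hxS : x ∉ S := by
      intro hxS
      have hc : IsCut R A B S := by
        intro a b l hch hh hl ha hb
        rcases hkey a b l hch hh hl ha hb with h | h
        · exact h
        · exact ⟨x, h.1, hxS⟩
      have := hcut S hc
      omega
    have hyS : y ∉ S := by
      intro hyS
      have hc : IsCut R A B S := by
        intro a b l hch hh hl ha hb
        rcases hkey a b l hch hh hl ha hb with h | h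
        · exact h
        · exact ⟨y, h.2, hyS⟩
      have := hcut S hc
      omega
    have hSx_cut : IsCut R A B (insert x S) := by
      intro a b l hch hh hl ha hb
      rcases hkey a b l hch hh hl ha hb with ⟨v, hv, hvS⟩ | h
      · exact ⟨v, hv, Finset.mem_insert_of_mem hvS⟩
      · exact ⟨x, h.1, Finset.mem_insert_self _ _⟩
    have hcardS : S.card + 1 = n := by
      have h1 := hcut _ hSx_cut
      rw [Finset.card_insert_of_notMem hxS] at h1
      omega
    set Sx : Finset V := insert x S with hSxdef
    set Sy : Finset V := insert y S with hSydef
    have hcutA : ∀ T : Finset V, IsCut R' A (↑Sx) T → n ≤ T.card := by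
      intro T hT
      apply hcut
      intro a b l hch hh hl ha hb
      by_cases hch' : l.IsChain R'
      · obtain ⟨v, hvl, hvS⟩ := hScut a b l hch' hh hl ha hb
        obtain ⟨p, q, rfl⟩ := List.append_of_mem hvl
        have hpre : (p ++ [v]) <+: (p ++ v :: q) := ⟨q, by simp⟩
        obtain ⟨u, hu, huT⟩ := hT a v (p ++ [v]) (hch'.prefix hpre)
          (by rw [prefix_head? hpre (by simp)]; exact hh)
          (by simp [List.getLast?_concat]) ha
          (by simp [hSxdef]; exact Or.inr hvS)
        exact ⟨u, hpre.subset hu, huT⟩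
      · obtain ⟨l₁, l₂, heq, hc⟩ := first_arc l hch hch'
        have hpre : (l₁ ++ [x]) <+: l := ⟨y :: l₂, by simp [heq]⟩
        obtain ⟨u, hu, huT⟩ := hT a x (l₁ ++ [x]) hc
          (by rw [prefix_head? hpre (by simp)]; exact hh)
          (by simp [List.getLast?_concat]) ha (by simp [hSxdef])
        exact ⟨u, hpre.subset hu, huT⟩
    have hcutB : ∀ T : Finset V, IsCut R' (↑Sy) B T → n ≤ T.card := by
      intro T hT
      apply hcut
      intro a b l hch hh hl ha hb
      by_cases hch' : l.IsChain R'
      · obtain ⟨v, hvl, hvS⟩ := hScut a b l hch' hh hl ha hb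
        obtain ⟨p, q, rfl⟩ := List.append_of_mem hvl
        have hsuf : (v :: q) <:+ (p ++ v :: q) := ⟨p, rfl⟩
        obtain ⟨u, hu, huT⟩ := hT v b (v :: q) (hch'.suffix hsuf)
          (by simp)
          (by rw [suffix_getLast? hsuf (by simp)]; exact hl)
          (by simp [hSydef]; exact Or.inr hvS) hb
        exact ⟨u, hsuf.subset hu, huT⟩
      · obtain ⟨l₁, l₂, heq, hc⟩ := last_arc l hch hch'
        have hsuf : (y :: l₂) <:+ l := ⟨l₁ ++ [x], by simp [heq]⟩
        obtain ⟨u, hu, huT⟩ := hT y b (y :: l₂) hc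
          (by simp)
          (by rw [suffix_getLast? hsuf (by simp)]; exact hl)
          (by simp [hSydef]) hb
        exact ⟨u, hsuf.subset hu, huT⟩
    obtain ⟨fP, hfP, hfPdisj⟩ := ih R' hirr' hcard' A (↑Sx) hcutA
    obtain ⟨fQ, hfQ, hfQdisj⟩ := ih R' hirr' hcard' (↑Sy) B hcutB
    -- truncate the P-paths at their first Sx-vertex
    choose P hPne hPpre hPhead hPlast hPavoid using
      fun i => trunc_last (↑Sx) (fP i) (hfP i).ne (hfP i).lastB
    -- truncate the Q-paths at their last Sy-vertex
    choose Q hQne hQsuf hQlastEq hQheadT hQavoid using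
      fun j => trunc_head (↑Sy) (fQ j) (hfQ j).ne (hfQ j).headA
    have hPsub : ∀ i, P i ⊆ fP i := fun i => (hPpre i).subset
    have hQsub : ∀ j, Q j ⊆ fQ j := fun j => (hQsuf j).subset
    have hPchain : ∀ i, (P i).IsChain R' := fun i => (hfP i).chain.prefix (hPpre i)
    have hQchain : ∀ j, (Q j).IsChain R' := fun j => (hfQ j).chain.suffix (hQsuf j)
    have hPnodup : ∀ i, (P i).Nodup := fun i => (hfP i).nodup.sublist (hPpre i).sublist
    have hQnodup : ∀ j, (Q j).Nodup := fun j => (hfQ j).nodup.sublist (hQsuf j).sublist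
    have hPheadA : ∀ i, (P i).head (hPne i) ∈ A := fun i => (hPhead i) ▸ (hfP i).headA
    have hQlastB : ∀ j, (Q j).getLast (hQne j) ∈ B := fun j => (hQlastEq j) ▸ (hfQ j).lastB
    have hPdisj : ∀ i j, i ≠ j → (P i).Disjoint (P j) :=
      fun i j hij a ha hb => hfPdisj i j hij (hPsub i ha) (hPsub j hb)
    have hQdisj : ∀ i j, i ≠ j → (Q i).Disjoint (Q j) :=
      fun i j hij a ha hb => hfQdisj i j hij (hQsub i ha) (hQsub j hb)
    have hPlast' : ∀ i, (P i).getLast (hPne i) ∈ Sx := fun i => by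
      have := hPlast i; rwa [Finset.mem_coe] at this
    have hQhead' : ∀ j, (Q j).head (hQne j) ∈ Sy := fun j => by
      have := hQheadT j; rwa [Finset.mem_coe] at this
    have hPmeet : ∀ i, ∀ u ∈ P i, u ∈ Sx → u = (P i).getLast (hPne i) := by
      intro i u hu huS
      rw [← List.dropLast_concat_getLast (hPne i), List.mem_append] at hu
      rcases hu with hu | hu
      · exact absurd (Finset.mem_coe.mpr huS) (hPavoid i u hu)
      · simpa using hu
    have hQmeet : ∀ j, ∀ u ∈ Q j, u ∈ Sy → u = (Q j).head (hQne j) := by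
      intro j u hu huS
      rw [← List.cons_head_tail (hQne j), List.mem_cons] at hu
      rcases hu with hu | hu
      · exact hu
      · exact absurd (Finset.mem_coe.mpr huS) (hQavoid j u hu)
    -- the endpoint bijections
    have hlastPinj : Function.Injective fun i => (P i).getLast (hPne i) := by
      intro i j h
      by_contra hne
      have h' : (P i).getLast (hPne i) = (P j).getLast (hPne j) := h
      refine hPdisj i j hne (List.getLast_mem (hPne i)) ?_
      rw [h']
      exact List.getLast_mem (hPne j)
    have hheadQinj : Function.Injective fun j => (Q j).head (hQne j) := by
      intro i j h
      by_contra hne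
      have h' : (Q i).head (hQne i) = (Q j).head (hQne j) := h
      refine hQdisj i j hne (List.head_mem (hQne i)) ?_
      rw [h']
      exact List.head_mem (hQne j)
    have hcardSx : Fintype.card ↥(Sx : Finset V) = n := by
      rw [Fintype.card_coe, hSxdef, Finset.card_insert_of_notMem hxS]
      omega
    have hcardSy : Fintype.card ↥(Sy : Finset V) = n := by
      rw [Fintype.card_coe, hSydef, Finset.card_insert_of_notMem hyS]
      omega
    set eP : Fin n → ↥(Sx : Finset V) := fun i => ⟨(P i).getLast (hPne i), hPlast' i⟩ with hePdef
    set eQ : Fin n → ↥(Sy : Finset V) := fun j => ⟨(Q j).head (hQne j), hQhead' j⟩ with heQdef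
    have hePinj : Function.Injective eP := fun i j h =>
      hlastPinj (congrArg Subtype.val h)
    have heQinj : Function.Injective eQ := fun i j h =>
      hheadQinj (congrArg Subtype.val h)
    have heQbij : Function.Bijective eQ :=
      (Fintype.bijective_iff_injective_and_card eQ).mpr ⟨heQinj, by rw [hcardSy, Fintype.card_fin]⟩
    set φ : ↥(Sx : Finset V) → ↥(Sy : Finset V) := fun v =>
      if h : (v : V) = x then ⟨y, Finset.mem_insert_self _ _⟩
      else ⟨(v : V), by
        rcases Finset.mem_insert.mp v.2 with hv | hv
        · exact absurd hv h
        · exact Finset.mem_insert_of_mem hv⟩ with hφdef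
    have hφx : ∀ v : ↥(Sx : Finset V), (v : V) = x → (φ v : V) = y := by
      intro v hv; simp [hφdef, hv]
    have hφnx : ∀ v : ↥(Sx : Finset V), (v : V) ≠ x → (φ v : V) = (v : V) := by
      intro v hv; simp [hφdef, hv]
    have hSmem_of_Sx : ∀ v : ↥(Sx : Finset V), (v : V) ≠ x → (v : V) ∈ S := by
      intro v hv
      rcases Finset.mem_insert.mp v.2 with h2 | h2
      · exact absurd h2 hv
      · exact h2
    have hφinj : Function.Injective φ := by
      intro u v h
      have hval : ((φ u : V)) = ((φ v : V)) := congrArg Subtype.val h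
      apply Subtype.ext
      by_cases hu : (u : V) = x <;> by_cases hv : (v : V) = x
      · rw [hu, hv]
      · exfalso
        rw [hφx u hu, hφnx v hv] at hval
        exact hyS (hval ▸ hSmem_of_Sx v hv)
      · exfalso
        rw [hφnx u hu, hφx v hv] at hval
        exact hyS (hval ▸ hSmem_of_Sx u hu)
      · rwa [hφnx u hu, hφnx v hv] at hval
    set eQequiv := Equiv.ofBijective eQ heQbij with heQequivdef
    set π : Fin n → Fin n := fun i => eQequiv.symm (φ (eP i)) with hπdef
    have hπval : ∀ i, eQ (π i) = φ (eP i) := fun i => eQequiv.apply_symm_apply _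
    have hπinj : Function.Injective π := by
      intro i j h
      apply hePinj
      apply hφinj
      have := congrArg eQequiv h
      rwa [Equiv.apply_symm_apply, Equiv.apply_symm_apply] at this
    have hQheadval : ∀ i, (Q (π i)).head (hQne (π i)) =
        if (P i).getLast (hPne i) = x then y else (P i).getLast (hPne i) := by
      intro i
      have h1 : (Q (π i)).head (hQne (π i)) = ((φ (eP i) : V)) :=
        congrArg Subtype.val (hπval i)
      by_cases h : (P i).getLast (hPne i) = x
      · rw [if_pos h, h1]
        exact hφx (eP i) h
      · rw [if_neg h, h1]
        exact hφnx (eP i) h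
    -- key claim: common vertices of a P-path and a Q-path lie in S
    have hclaim : ∀ i j, ∀ v, v ∈ P i → v ∈ Q j → v ∈ S := by
      intro i j v hvP hvQ
      by_contra hvS
      obtain ⟨p, q, hPeq⟩ := List.append_of_mem hvP
      obtain ⟨r, s', hQeq⟩ := List.append_of_mem hvQ
      have hch1 : (p ++ [v]).IsChain R' :=
        (hPchain i).prefix (by rw [hPeq]; exact ⟨q, by simp⟩)
      have hch2 : ([v] ++ s').IsChain R' :=
        (hQchain j).suffix (by rw [hQeq]; exact ⟨r, by simp⟩)
      have hch : (p ++ [v] ++ s').IsChain R' := hch1.append_overlap hch2 (by simp)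
      have hh : (p ++ [v] ++ s').head? = some ((P i).head (hPne i)) := by
        have e1 : (p ++ [v]).head? = (p ++ [v] ++ s').head? :=
          prefix_head? ⟨s', rfl⟩ (by simp)
        have e2 : (p ++ [v]).head? = (P i).head? := by
          rw [hPeq]; exact prefix_head? ⟨q, by simp⟩ (by simp)
        rw [← e1, e2, head?_eq (hPne i)]
      have hl : (p ++ [v] ++ s').getLast? = some ((Q j).getLast (hQne j)) := by
        have e1 : (v :: s').getLast? = (p ++ [v] ++ s').getLast? :=
          suffix_getLast? ⟨p, by simp⟩ (by simp)
        have e2 : (v :: s').getLast? = (Q j).getLast? := by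
          rw [hQeq]; exact suffix_getLast? ⟨r, rfl⟩ (by simp)
        rw [← e1, e2, getLast?_eq (hQne j)]
      obtain ⟨u, hu, huS⟩ := hScut _ _ _ hch hh hl (hPheadA i) (hQlastB j)
      rw [List.mem_append, List.mem_append] at hu
      rcases hu with (hu | hu) | hu
      · have hmem : u ∈ P i := by rw [hPeq]; exact List.mem_append_left _ hu
        have := hPmeet i u hmem (by rw [hSxdef]; exact Finset.mem_insert_of_mem huS)
        -- u ∈ p, so u is in the dropLast of P i, contradiction with it being the last
        have hdrop : u ∈ (P i).dropLast := by
          rw [hPeq, List.dropLast_append_cons]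
          exact List.mem_append_left _ hu
        exact hPavoid i u hdrop (by rw [hSxdef]; exact Finset.mem_coe.mpr (Finset.mem_insert_of_mem huS))
      · simp only [List.mem_singleton] at hu
        exact hvS (hu ▸ huS)
      · have htail : u ∈ (Q j).tail := by
          rw [hQeq]
          cases r with
          | nil => exact hu
          | cons c r' => exact List.mem_append_right _ (List.mem_cons_of_mem _ hu)
        exact hQavoid j u htail (by rw [hSydef]; exact Finset.mem_coe.mpr (Finset.mem_insert_of_mem huS))
    -- gluing
    set g : Fin n → List V := fun i =>
      if (P i).getLast (hPne i) = x then P i ++ Q (π i) else P i ++ (Q (π i)).tail with hgdef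
    have hgP_pre : ∀ i, (P i) <+: g i := by
      intro i
      by_cases h : (P i).getLast (hPne i) = x
      · simp only [hgdef]; rw [if_pos h]; exact ⟨Q (π i), rfl⟩
      · simp only [hgdef]; rw [if_neg h]; exact ⟨(Q (π i)).tail, rfl⟩
    have hgne : ∀ i, g i ≠ [] := by
      intro i h
      obtain ⟨r, hr⟩ := hgP_pre i
      rw [h] at hr
      exact hPne i (List.append_eq_nil_iff.mp hr).1
    have hgsub : ∀ i, ∀ u ∈ g i, u ∈ P i ∨ u ∈ Q (π i) := by
      intro i u hu
      by_cases h : (P i).getLast (hPne i) = x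
      · simp only [hgdef] at hu; rw [if_pos h] at hu
        rcases List.mem_append.mp hu with hu | hu
        · exact Or.inl hu
        · exact Or.inr hu
      · simp only [hgdef] at hu; rw [if_neg h] at hu
        rcases List.mem_append.mp hu with hu | hu
        · exact Or.inl hu
        · exact Or.inr (List.mem_of_mem_tail hu)
    have hPS_last : ∀ i, ∀ u, u ∈ P i → u ∈ S → u = (P i).getLast (hPne i) :=
      fun i u hu huS => hPmeet i u hu (Finset.mem_insert_of_mem huS)
    have hQS_head : ∀ j, ∀ u, u ∈ Q j → u ∈ S → u = (Q j).head (hQne j) :=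
      fun j u hu huS => hQmeet j u hu (Finset.mem_insert_of_mem huS)
    have hPQdisjx : ∀ i j, (P i).getLast (hPne i) = x → (P i).Disjoint (Q j) := by
      intro i j h u huP huQ
      have huS := hclaim i j u huP huQ
      have hux : u = x := (hPS_last i u huP huS).trans h
      rw [hux] at huS
      exact hxS huS
    have hPQdisjtail : ∀ i, (P i).getLast (hPne i) ≠ x → (P i).Disjoint ((Q (π i)).tail) := by
      intro i h u huP hutail
      have huQ : u ∈ Q (π i) := List.mem_of_mem_tail hutail
      have huS := hclaim i (π i) u huP huQ
      have h2 : u = (Q (π i)).head (hQne (π i)) := hQS_head (π i) u huQ huS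
      have hhnt : (Q (π i)).head (hQne (π i)) ∉ (Q (π i)).tail := by
        have hnd := hQnodup (π i)
        rw [← List.cons_head_tail (hQne (π i))] at hnd
        exact (List.nodup_cons.mp hnd).1
      rw [h2] at hutail
      exact hhnt hutail
    have hgchain : ∀ i, (g i).IsChain R := by
      intro i
      by_cases h : (P i).getLast (hPne i) = x
      · simp only [hgdef]; rw [if_pos h]
        refine List.IsChain.append (hmono (hPchain i)) (hmono (hQchain (π i))) ?_
        intro a ha b hb
        rw [getLast?_eq (hPne i)] at ha
        rw [head?_eq (hQne (π i))] at hb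
        have ha' : a = (P i).getLast (hPne i) := by simpa using ha.symm
        have hb' : b = (Q (π i)).head (hQne (π i)) := by simpa using hb.symm
        rw [ha', hb', h, hQheadval i, if_pos h]
        exact hxy
      · have hhead : (Q (π i)).head (hQne (π i)) = (P i).getLast (hPne i) := by
          rw [hQheadval i, if_neg h]
        have h1 : ((P i).dropLast ++ [(P i).getLast (hPne i)]).IsChain R := by
          rw [List.dropLast_concat_getLast (hPne i)]
          exact hmono (hPchain i)
        have h2 : ([(P i).getLast (hPne i)] ++ (Q (π i)).tail).IsChain R := by
          have hc : ((Q (π i)).head (hQne (π i)) :: (Q (π i)).tail).IsChain R := by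
            rw [List.cons_head_tail]
            exact hmono (hQchain (π i))
          rw [hhead] at hc
          simpa using hc
        have h3 := h1.append_overlap h2 (by simp)
        rw [List.dropLast_concat_getLast (hPne i)] at h3
        simp only [hgdef]; rw [if_neg h]
        exact h3
    have hgh : ∀ i, (g i).head? = some ((P i).head (hPne i)) := by
      intro i
      rw [← prefix_head? (hgP_pre i) (hPne i), head?_eq (hPne i)]
    have hgl : ∀ i, (g i).getLast? = some ((Q (π i)).getLast (hQne (π i))) := by
      intro i
      by_cases h : (P i).getLast (hPne i) = x
      · have hsuf : Q (π i) <:+ g i := by simp only [hgdef]; rw [if_pos h]; exact ⟨P i, rfl⟩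
        rw [← suffix_getLast? hsuf (hQne (π i)), getLast?_eq (hQne (π i))]
      · by_cases ht : (Q (π i)).tail = []
        · have hQeq : Q (π i) = [(Q (π i)).head (hQne (π i))] := by
            conv_lhs => rw [← List.cons_head_tail (hQne (π i)), ht]
          have e3 : (Q (π i)).getLast (hQne (π i)) = (Q (π i)).head (hQne (π i)) := by
            have e1 : (Q (π i)).getLast? = some ((Q (π i)).head (hQne (π i))) := by
              conv_lhs => rw [hQeq]
              simp
            rw [getLast?_eq (hQne (π i))] at e1
            exact Option.some_injective _ e1
          have e2 : g i = P i := by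
            simp only [hgdef]; rw [if_neg h, ht, List.append_nil]
          rw [e2, getLast?_eq (hPne i), e3, hQheadval i, if_neg h]
        · have hsuf1 : (Q (π i)).tail <:+ g i := by
            simp only [hgdef]; rw [if_neg h]; exact ⟨P i, rfl⟩
          have hsuf2 : (Q (π i)).tail <:+ Q (π i) := List.tail_suffix _
          rw [← suffix_getLast? hsuf1 ht, suffix_getLast? hsuf2 ht, getLast?_eq (hQne (π i))]
    have hgnodup : ∀ i, (g i).Nodup := by
      intro i
      by_cases h : (P i).getLast (hPne i) = x
      · simp only [hgdef]; rw [if_pos h]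
        exact (hPnodup i).append (hQnodup (π i)) (hPQdisjx i (π i) h)
      · simp only [hgdef]; rw [if_neg h]
        exact (hPnodup i).append ((hQnodup (π i)).sublist (List.tail_sublist _))
          (hPQdisjtail i h)
    refine ⟨g, ?_, ?_⟩
    · intro i
      refine ⟨hgne i, hgchain i, hgnodup i, ?_, ?_⟩
      · have e := hgh i
        rw [head?_eq (hgne i)] at e
        have e' := Option.some_injective _ e
        rw [e']
        exact hPheadA i
      · have e := hgl i
        rw [getLast?_eq (hgne i)] at e
        have e' := Option.some_injective _ e
        rw [e']
        exact hQlastB (π i)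
    · intro i j hij u hui huj
      rcases hgsub i u hui with hP1 | hQ1 <;> rcases hgsub j u huj with hP2 | hQ2
      · exact hPdisj i j hij hP1 hP2
      · have huS := hclaim i (π j) u hP1 hQ2
        have h1 : u = (P i).getLast (hPne i) := hPS_last i u hP1 huS
        have h2 : u = (Q (π j)).head (hQne (π j)) := hQS_head (π j) u hQ2 huS
        rw [hQheadval j] at h2
        by_cases hx : (P j).getLast (hPne j) = x
        · rw [if_pos hx] at h2
          rw [h2] at huS
          exact hyS huS
        · rw [if_neg hx] at h2
          exact hij (hlastPinj (h1.symm.trans h2))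
      · have huS := hclaim j (π i) u hP2 hQ1
        have h1 : u = (P j).getLast (hPne j) := hPS_last j u hP2 huS
        have h2 : u = (Q (π i)).head (hQne (π i)) := hQS_head (π i) u hQ1 huS
        rw [hQheadval i] at h2
        by_cases hx : (P i).getLast (hPne i) = x
        · rw [if_pos hx] at h2
          rw [h2] at huS
          exact hyS huS
        · rw [if_neg hx] at h2
          exact hij (hlastPinj (h2.symm.trans h1))
      · exact hQdisj (π i) (π j) (fun hc => hij (hπinj hc)) hQ1 hQ2



lemma walk_of_chain (G : SimpleGraph V) : ∀ (l : List V) (a b : V), l.IsChain G.Adj →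
    l.head? = some a → l.getLast? = some b → ∃ w : G.Walk a b, w.support = l := by
  intro l
  induction l with
  | nil => intro a b _ hh _; simp at hh
  | cons c t ih =>
    intro a b hch hh hl
    have hac : a = c := by simpa using hh.symm
    subst hac
    cases t with
    | nil =>
      have hab : b = a := by simpa using hl.symm
      subst hab
      exact ⟨SimpleGraph.Walk.nil, rfl⟩
    | cons d t' =>
      rw [List.isChain_cons_cons] at hch
      have hl' : (d :: t').getLast? = some b := by
        rw [← hl, List.getLast?_cons_cons]
      obtain ⟨w', hw'⟩ := ih d b hch.2 rfl hl'
      exact ⟨SimpleGraph.Walk.cons hch.1 w', by simp [hw']⟩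


lemma mem_eq_getLast {T : Set V} {l : List V} (hne : l ≠ [])
    (hav : ∀ v ∈ l.dropLast, v ∉ T) {u : V} (hu : u ∈ l) (huT : u ∈ T) :
    u = l.getLast hne := by
  rw [← List.dropLast_concat_getLast hne, List.mem_append] at hu
  rcases hu with hu | hu
  · exact absurd huT (hav u hu)
  · simpa using hu

lemma head_not_mem_tail {l : List V} (hne : l ≠ []) (hnd : l.Nodup) :
    l.head hne ∉ l.tail := by
  rw [← List.cons_head_tail hne] at hnd
  exact (List.nodup_cons.mp hnd).1

end MengerAux

open MengerAux

theorem stmt_2 {V : Type*} (G : SimpleGraph V) (k : ℕ)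
    (hG : KConnected G (2 * k)) (H : G.Subgraph) (hH : KLinked H.coe k) :
    KLinked G k := by
  classical
  obtain ⟨hVcard, hconn⟩ := hG
  obtain ⟨hHcard, hlink⟩ := hH
  have hfin : Finite V := Nat.finite_of_card_ne_zero (by omega)
  haveI : Fintype V := Fintype.ofFinite V
  refine ⟨by omega, ?_⟩
  intro s t hinj
  set A : Set V := Set.range (Sum.elim s t) with hAdef
  set B : Set V := H.verts with hBdef
  have hcut : ∀ S : Finset V, IsCut G.Adj A B S → 2 * k ≤ S.card := by
    intro S hS
    by_contra hlt
    push_neg at hlt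
    have hconnS := hconn S hlt
    have hAcard : (Finset.univ.image (Sum.elim s t)).card = 2 * k := by
      rw [Finset.card_image_of_injective _ hinj, Finset.card_univ]
      simp only [Fintype.card_sum, Fintype.card_fin]
      omega
    obtain ⟨a, haA, haS⟩ : ∃ a ∈ Finset.univ.image (Sum.elim s t), a ∉ S := by
      by_contra hc
      push_neg at hc
      have := Finset.card_le_card hc
      omega
    obtain ⟨b, hbB, hbS⟩ : ∃ b ∈ B, b ∉ S := by
      by_contra hc
      push_neg at hc
      have hsub : B ⊆ (↑S : Set V) := fun u hu => Finset.mem_coe.mpr (hc u hu)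
      have h1 : B.ncard ≤ (↑S : Set V).ncard := Set.ncard_le_ncard hsub (Set.toFinite _)
      rw [Set.ncard_coe_finset] at h1
      have h2 : Nat.card B = B.ncard := Nat.card_coe_set_eq B
      omega
    have haC : a ∈ ((↑S : Set V)ᶜ : Set V) := by simpa using haS
    have hbC : b ∈ ((↑S : Set V)ᶜ : Set V) := by simpa using hbS
    obtain ⟨w⟩ := hconnS.preconnected ⟨a, haC⟩ ⟨b, hbC⟩
    set w' := w.map (SimpleGraph.Embedding.induce ((↑S : Set V)ᶜ)).toHom with hw'def
    obtain ⟨v, hv, hvS⟩ := hS a b w'.support (SimpleGraph.Walk.isChain_adj_support w')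
      (by rw [w'.support_eq_cons]; rfl)
      (by rw [getLast?_eq w'.support_ne_nil]; exact congrArg some w'.getLast_support)
      (by show a ∈ Set.range (Sum.elim s t)
          simp only [Finset.mem_image, Finset.mem_univ, true_and] at haA
          obtain ⟨z, hz⟩ := haA; exact ⟨z, hz⟩)
      hbB
    rw [hw'def, SimpleGraph.Walk.support_map, List.mem_map] at hv
    obtain ⟨u, hu, rfl⟩ := hv
    exact u.2 (Finset.mem_coe.mpr hvS)
  obtain ⟨f, hf, hfdisj⟩ := menger_nat (2 * k) ({p : V × V | G.Adj p.1 p.2}.ncard)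
    G.Adj G.loopless.irrefl le_rfl A B hcut
  -- truncate at the first H-vertex
  choose c hcne hcpre hchead hclast hcavoid using
    fun i => trunc_last B (f i) (hf i).ne (hf i).lastB
  have hcsub : ∀ i, c i ⊆ f i := fun i => (hcpre i).subset
  have hcchain : ∀ i, (c i).IsChain G.Adj := fun i => (hf i).chain.prefix (hcpre i)
  have hcnodup : ∀ i, (c i).Nodup := fun i => (hf i).nodup.sublist (hcpre i).sublist
  have hcheadA : ∀ i, (c i).head (hcne i) ∈ A := fun i => (hchead i) ▸ (hf i).headA
  have hcdisj : ∀ i j, i ≠ j → (c i).Disjoint (c j) :=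
    fun i j hij u hu hu' => hfdisj i j hij (hcsub i hu) (hcsub j hu')
  -- the heads enumerate A bijectively
  have hheadinj : Function.Injective fun i => (c i).head (hcne i) := by
    intro i j h
    by_contra hne
    have h' : (c i).head (hcne i) = (c j).head (hcne j) := h
    refine hcdisj i j hne (List.head_mem (hcne i)) ?_
    rw [h']
    exact List.head_mem (hcne j)
  set hd : Fin (2 * k) → ↥A := fun i => ⟨(c i).head (hcne i), hcheadA i⟩ with hhddef
  have hhdinj : Function.Injective hd := fun i j h => hheadinj (congrArg Subtype.val h)
  have hcardA : Nat.card ↥A = 2 * k := by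
    have h1 : Nat.card ↥A = Nat.card (Fin k ⊕ Fin k) := Nat.card_range_of_injective hinj
    rw [h1, Nat.card_sum]
    simp only [Nat.card_eq_fintype_card, Fintype.card_fin]
    omega
  have hhdbij : Function.Bijective hd :=
    (Nat.bijective_iff_injective_and_card hd).mpr ⟨hhdinj, by
      rw [hcardA]
      simp⟩
  set eA : Fin k ⊕ Fin k → ↥A := fun z => ⟨Sum.elim s t z, Set.mem_range_self z⟩ with heAdef
  set hdEquiv := Equiv.ofBijective hd hhdbij with hhdEquivdef
  set ρ : Fin k ⊕ Fin k → Fin (2 * k) := fun z => hdEquiv.symm (eA z) with hρdef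
  have hρval : ∀ z, hd (ρ z) = eA z := fun z => hdEquiv.apply_symm_apply _
  have hρinj : Function.Injective ρ := by
    intro z z' h
    have h2 : eA z = eA z' := by
      rw [← hρval z, ← hρval z', h]
    exact hinj (congrArg Subtype.val h2)
  have hheadρ : ∀ z, (c (ρ z)).head (hcne (ρ z)) = Sum.elim s t z :=
    fun z => congrArg Subtype.val (hρval z)
  -- endpoints inside H
  have hlastH : ∀ i, (c i).getLast (hcne i) ∈ H.verts := fun i => hclast i
  set aa : Fin k → ↥H.verts := fun i => ⟨(c (ρ (Sum.inl i))).getLast _, hlastH _⟩ with haadef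
  set bb : Fin k → ↥H.verts := fun i => ⟨(c (ρ (Sum.inr i))).getLast _, hlastH _⟩ with hbbdef
  have habval : ∀ z, ((Sum.elim aa bb z : ↥H.verts) : V) = (c (ρ z)).getLast (hcne (ρ z)) := by
    intro z; cases z <;> rfl
  have hlastinj : ∀ z z', z ≠ z' →
      (c (ρ z)).getLast (hcne (ρ z)) ≠ (c (ρ z')).getLast (hcne (ρ z')) := by
    intro z z' hzz heq
    have h1 : (c (ρ z)).getLast (hcne (ρ z)) ∈ c (ρ z) := List.getLast_mem _
    have h2 : (c (ρ z)).getLast (hcne (ρ z)) ∈ c (ρ z') := by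
      rw [heq]; exact List.getLast_mem _
    exact hcdisj (ρ z) (ρ z') (fun hc' => hzz (hρinj hc')) h1 h2
  have habinj : Function.Injective (Sum.elim aa bb) := by
    intro z z' h
    by_contra hne
    exact hlastinj z z' hne (by rw [← habval z, ← habval z', h])
  obtain ⟨W, hWpath, hWdisj⟩ := hlink aa bb habinj
  -- the three pieces of each path
  have hLex : ∀ i : Fin k, ∃ w : G.Walk (s i) ((aa i : V)), w.support = c (ρ (Sum.inl i)) := by
    intro i
    refine walk_of_chain G _ _ _ (hcchain _) ?_ ?_
    · rw [head?_eq (hcne (ρ (Sum.inl i))), hheadρ (Sum.inl i)]; rfl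
    · rw [getLast?_eq (hcne (ρ (Sum.inl i)))]
  have hTex : ∀ i : Fin k, ∃ w : G.Walk (t i) ((bb i : V)), w.support = c (ρ (Sum.inr i)) := by
    intro i
    refine walk_of_chain G _ _ _ (hcchain _) ?_ ?_
    · rw [head?_eq (hcne (ρ (Sum.inr i))), hheadρ (Sum.inr i)]; rfl
    · rw [getLast?_eq (hcne (ρ (Sum.inr i)))]
  choose L hLsupp using hLex
  choose T hTsupp using hTex
  set w : ∀ i : Fin k, G.Walk (s i) (t i) :=
    fun i => ((L i).append ((W i).map H.hom)).append ((T i).reverse) with hwdef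
  have hHomInj : Function.Injective (⇑H.hom) := Subtype.val_injective
  have hsupp : ∀ i, (w i).support =
      (c (ρ (Sum.inl i)) ++ ((W i).support.map (⇑H.hom)).tail) ++
        ((c (ρ (Sum.inr i))).reverse).tail := by
    intro i
    show (((L i).append ((W i).map H.hom)).append ((T i).reverse)).support = _
    have e1 := SimpleGraph.Walk.support_append ((L i).append ((W i).map H.hom)) ((T i).reverse)
    have e2 := SimpleGraph.Walk.support_append (L i) ((W i).map H.hom)
    have e3 := SimpleGraph.Walk.support_map H.hom (W i)
    rw [e1, e2]
    exact congrArg₂ (· ++ ·) (congrArg₂ (· ++ ·) (hLsupp i) (congrArg List.tail e3))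
      (congrArg List.tail ((SimpleGraph.Walk.support_reverse (T i)).trans (by rw [hTsupp])))
  have hMB : ∀ (j : Fin k) (u : V), u ∈ (W j).support.map (⇑H.hom) → u ∈ B := by
    intro j u hu
    rw [List.mem_map] at hu
    obtain ⟨u', _, rfl⟩ := hu
    exact u'.2
  have hM_iff : ∀ (j : Fin k) (u : ↥H.verts),
      ((u : V) ∈ (W j).support.map (⇑H.hom)) ↔ u ∈ (W j).support := by
    intro j u
    rw [List.mem_map]
    constructor
    · rintro ⟨u', hu', he⟩
      rwa [Subtype.ext he] at hu'
    · intro hu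
      exact ⟨u, hu, rfl⟩
  have hMnodup : ∀ j, ((W j).support.map (⇑H.hom)).Nodup :=
    fun j => ((hWpath j).support_nodup).map hHomInj
  have hMeq : ∀ j, (W j).support.map (⇑H.hom) =
      ((aa j : V)) :: ((W j).support.tail.map (⇑H.hom)) := by
    intro j
    conv_lhs => rw [SimpleGraph.Walk.support_eq_cons (W j)]
    rfl
  have haa_not_tail : ∀ j, ((aa j : V)) ∉ ((W j).support.map (⇑H.hom)).tail := by
    intro j h
    have hnd := hMnodup j
    rw [hMeq j] at h hnd
    exact (List.nodup_cons.mp hnd).1 h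
  -- generic: a vertex of a c-list lying in a W-support forces an endpoint coincidence
  have hcM : ∀ (z : Fin k ⊕ Fin k) (j : Fin k) (u : V), u ∈ c (ρ z) →
      u ∈ (W j).support.map (⇑H.hom) → (Sum.elim aa bb z) ∈ (W j).support := by
    intro z j u huc huM
    have huB : u ∈ B := hMB j u huM
    have he : u = ((Sum.elim aa bb z : ↥H.verts) : V) :=
      (mem_eq_getLast (hcne (ρ z)) (hcavoid (ρ z)) huc huB).trans (habval z).symm
    rw [he] at huM
    exact (hM_iff j _).mp huM
  have hstart : ∀ i : Fin k, (Sum.elim aa bb (Sum.inl i)) ∈ (W i).support :=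
    fun i => SimpleGraph.Walk.start_mem_support (W i)
  have hend : ∀ i : Fin k, (Sum.elim aa bb (Sum.inr i)) ∈ (W i).support :=
    fun i => SimpleGraph.Walk.end_mem_support (W i)
  have hRhead : ∀ i : Fin k, ((c (ρ (Sum.inr i))).reverse).head (by simp [hcne _]) =
      ((bb i : V)) := by
    intro i
    rw [List.head_reverse]
  refine ⟨w, ?_, ?_⟩
  · intro i
    rw [SimpleGraph.Walk.isPath_def, hsupp i]
    have ndL : (c (ρ (Sum.inl i))).Nodup := hcnodup _
    have ndMt : (((W i).support.map (⇑H.hom)).tail).Nodup :=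
      (hMnodup i).sublist (List.tail_sublist _)
    have ndRt : (((c (ρ (Sum.inr i))).reverse).tail).Nodup :=
      ((List.nodup_reverse.mpr (hcnodup _)).sublist (List.tail_sublist _))
    have disj1 : (c (ρ (Sum.inl i))).Disjoint (((W i).support.map (⇑H.hom)).tail) := by
      intro u huL huMt
      have huM : u ∈ (W i).support.map (⇑H.hom) := List.mem_of_mem_tail huMt
      have huB : u ∈ B := hMB i u huM
      have he : u = ((aa i : V)) :=
        mem_eq_getLast (hcne (ρ (Sum.inl i))) (hcavoid (ρ (Sum.inl i))) huL huB
      rw [he] at huMt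
      exact haa_not_tail i huMt
    have disj2 : (c (ρ (Sum.inl i)) ++ ((W i).support.map (⇑H.hom)).tail).Disjoint
        (((c (ρ (Sum.inr i))).reverse).tail) := by
      intro u hu huRt
      have huR : u ∈ c (ρ (Sum.inr i)) := by
        rw [← List.mem_reverse]
        exact List.mem_of_mem_tail huRt
      rcases List.mem_append.mp hu with huL | huMt
      · exact hcdisj (ρ (Sum.inl i)) (ρ (Sum.inr i))
          (fun hc' => by simpa using hρinj hc') huL huR
      · have huM : u ∈ (W i).support.map (⇑H.hom) := List.mem_of_mem_tail huMt
        have huB : u ∈ B := hMB i u huM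
        have he : u = ((bb i : V)) :=
          mem_eq_getLast (hcne (ρ (Sum.inr i))) (hcavoid (ρ (Sum.inr i))) huR huB
        have hhnt := head_not_mem_tail (l := (c (ρ (Sum.inr i))).reverse)
          (by simp [hcne _]) (List.nodup_reverse.mpr (hcnodup _))
        rw [hRhead i] at hhnt
        rw [he] at huRt
        exact hhnt huRt
    exact (ndL.append ndMt disj1).append ndRt disj2
  · intro i j hij u hui huj
    have hcases : ∀ (m : Fin k) (v : V), v ∈ (w m).support →
        v ∈ c (ρ (Sum.inl m)) ∨ v ∈ (W m).support.map (⇑H.hom) ∨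
          v ∈ c (ρ (Sum.inr m)) := by
      intro m v hv
      rw [hsupp m] at hv
      rcases List.mem_append.mp hv with hv | hv
      · rcases List.mem_append.mp hv with hv | hv
        · exact Or.inl hv
        · exact Or.inr (Or.inl (List.mem_of_mem_tail hv))
      · refine Or.inr (Or.inr ?_)
        rw [← List.mem_reverse]
        exact List.mem_of_mem_tail hv
    have hWd : ∀ (a b : Fin k) (v : V), a ≠ b → v ∈ (W a).support.map (⇑H.hom) →
        v ∈ (W b).support.map (⇑H.hom) → False := by
      intro a b v hab hva hvb
      have h1 : v ∈ B := hMB a v hva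
      have h2 := (hM_iff a ⟨v, h1⟩).mp hva
      have h3 := (hM_iff b ⟨v, h1⟩).mp hvb
      exact hWdisj a b hab h2 h3
    have hcc : ∀ (z z' : Fin k ⊕ Fin k) (v : V), z ≠ z' → v ∈ c (ρ z) → v ∈ c (ρ z') → False :=
      fun z z' v hzz h1 h2 => hcdisj (ρ z) (ρ z') (fun hc' => hzz (hρinj hc')) h1 h2
    have hcMW : ∀ (z : Fin k ⊕ Fin k) (m : Fin k) (v : V),
        (Sum.elim aa bb z ∉ (W m).support) → v ∈ c (ρ z) →
        v ∈ (W m).support.map (⇑H.hom) → False :=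
      fun z m v hn h1 h2 => hn (hcM z m v h1 h2)
    rcases hcases i u hui with h1 | h1 | h1 <;> rcases hcases j u huj with h2 | h2 | h2
    · exact hcc _ _ u (fun h => hij (Sum.inl_injective h)) h1 h2
    · exact hcMW _ j u (fun hmem => hWdisj i j hij (hstart i) hmem) h1 h2
    · exact hcc _ _ u Sum.inl_ne_inr h1 h2
    · exact hcMW _ i u (fun hmem => hWdisj j i (Ne.symm hij) (hstart j) hmem) h2 h1
    · exact hWd i j u hij h1 h2
    · exact hcMW _ i u (fun hmem => hWdisj j i (Ne.symm hij) (hend j) hmem) h2 h1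
    · exact hcc _ _ u Sum.inr_ne_inl h1 h2
    · exact hcMW _ j u (fun hmem => hWdisj i j hij (hend i) hmem) h1 h2
    · exact hcc _ _ u (fun h => hij (Sum.inr_injective h)) h1 h2
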